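/- Let ω be a semi-selforthogonal subcategory of a triangulated category T that is functorially finite in T. Then ω⊥ equals the co-Auslander class ωX, and ⊥ω equals the Auslander class X_ω. -/

import Mathlib

open CategoryTheory Category Limits Pretriangulated

universe v u

namespace RelSing

variable {C : Type u} [Category.{v} C] [Preadditive C] [HasZeroObject C]
  [HasShift C ℤ] [∀ n : ℤ, (shiftFunctor C n).Additive] [Pretriangulated C]

/-- `ω` is semi-selforthogonal (presilting): `Hom(M, M'[i]) = 0` for `M, M' ∈ ω`, `i > 0`. -/
def SemiSelfOrth (ω : Set C) : Prop :=
  ∀ M ∈ ω, ∀ M' ∈ ω, ∀ i : ℤ, 0 < i → ∀ f : M ⟶ M'⟦i⟧, f = 0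

/-- `add ω`: closure of `ω` under zero objects, finite direct sums (expressed via
biproduct data) and direct summands (retracts). -/
inductive AddCat (ω : Set C) : C → Prop
  | of {X : C} (hX : X ∈ ω) : AddCat ω X
  | zero {X : C} (hX : IsZero X) : AddCat ω X
  | sum {X Y Z : C} (i₁ : X ⟶ Z) (i₂ : Y ⟶ Z) (p₁ : Z ⟶ X) (p₂ : Z ⟶ Y)
      (h₁ : i₁ ≫ p₁ = 𝟙 X) (h₂ : i₂ ≫ p₂ = 𝟙 Y) (h₁₂ : i₁ ≫ p₂ = 0) (h₂₁ : i₂ ≫ p₁ = 0)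
      (hZ : p₁ ≫ i₁ + p₂ ≫ i₂ = 𝟙 Z) (hX : AddCat ω X) (hY : AddCat ω Y) : AddCat ω Z
  | retract {X Y : C} (i : X ⟶ Y) (r : Y ⟶ X) (hir : i ≫ r = 𝟙 X) (hY : AddCat ω Y) :
      AddCat ω X

/-- The left orthogonal `⊥ω`. -/
def leftPerp (ω : Set C) : Set C :=
  {N | ∀ M ∈ ω, ∀ i : ℤ, 0 < i → ∀ f : N ⟶ M⟦i⟧, f = 0}

/-- The right orthogonal `ω⊥`. -/
def rightPerp (ω : Set C) : Set C :=
  {N | ∀ M ∈ ω, ∀ i : ℤ, 0 < i → ∀ f : M ⟶ N⟦i⟧, f = 0}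

/-- The Auslander class `X_ω`: objects `T₀` with triangles `T_i → M_i → T_{i+1} → T_i[1]`
for all `i ≥ 0`, `M_i ∈ add ω`, `T_i ∈ ⊥ω`. -/
def Auslander (ω : Set C) : Set C :=
  {X | ∃ (T : ℕ → C) (M : ℕ → C) (f : ∀ i, T i ⟶ M i) (g : ∀ i, M i ⟶ T (i + 1))
      (h : ∀ i, T (i + 1) ⟶ (T i)⟦(1 : ℤ)⟧),
    T 0 = X ∧ (∀ i, Triangle.mk (f i) (g i) (h i) ∈ distTriang C) ∧
      (∀ i, AddCat ω (M i)) ∧ (∀ i, T i ∈ leftPerp ω)}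

/-- The co-Auslander class `ωX`: objects `T₀` with triangles `T_{i+1} → M_i → T_i → T_{i+1}[1]`
for all `i ≥ 0`, `M_i ∈ add ω`, `T_i ∈ ω⊥`. -/
def coAuslander (ω : Set C) : Set C :=
  {X | ∃ (T : ℕ → C) (M : ℕ → C) (f : ∀ i, T (i + 1) ⟶ M i) (g : ∀ i, M i ⟶ T i)
      (h : ∀ i, T i ⟶ (T (i + 1))⟦(1 : ℤ)⟧),
    T 0 = X ∧ (∀ i, Triangle.mk (f i) (g i) (h i) ∈ distTriang C) ∧
      (∀ i, AddCat ω (M i)) ∧ (∀ i, T i ∈ rightPerp ω)}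

/-- `check S` (`S̬`): objects `X₀` with triangles `X_i → C_i → X_{i+1} → X_i[1]` for
`0 ≤ i ≤ r`, `C_i ∈ S`, `X_{r+1} = 0`. -/
def CheckClass (S : Set C) : Set C :=
  {X | ∃ (r : ℕ) (T : ℕ → C) (M : ℕ → C) (f : ∀ i, T i ⟶ M i) (g : ∀ i, M i ⟶ T (i + 1))
      (h : ∀ i, T (i + 1) ⟶ (T i)⟦(1 : ℤ)⟧),
    T 0 = X ∧ IsZero (T (r + 1)) ∧ (∀ i ≤ r, Triangle.mk (f i) (g i) (h i) ∈ distTriang C) ∧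
      (∀ i ≤ r, M i ∈ S)}

/-- `hat S` (`Ŝ`): objects `X₀` with triangles `X_{i+1} → C_i → X_i → X_{i+1}[1]` for
`0 ≤ i ≤ r`, `C_i ∈ S`, `X_{r+1} = 0`. -/
def HatClass (S : Set C) : Set C :=
  {X | ∃ (r : ℕ) (T : ℕ → C) (M : ℕ → C) (f : ∀ i, T (i + 1) ⟶ M i) (g : ∀ i, M i ⟶ T i)
      (h : ∀ i, T i ⟶ (T (i + 1))⟦(1 : ℤ)⟧),
    T 0 = X ∧ IsZero (T (r + 1)) ∧ (∀ i ≤ r, Triangle.mk (f i) (g i) (h i) ∈ distTriang C) ∧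
      (∀ i ≤ r, M i ∈ S)}

/-- A (strictly full) triangulated subcategory, as a predicate on sets of objects. -/
structure IsTriangulatedSub (S : Set C) : Prop where
  zero : ∀ X : C, IsZero X → X ∈ S
  iso : ∀ {X Y : C}, (X ≅ Y) → X ∈ S → Y ∈ S
  shift : ∀ X ∈ S, ∀ n : ℤ, X⟦n⟧ ∈ S
  ext₂ : ∀ T ∈ distTriang C, T.obj₁ ∈ S → T.obj₃ ∈ S → T.obj₂ ∈ S

/-- `⟨S⟩`: the smallest triangulated subcategory containing `S`. -/
def genTriang (S : Set C) : Set C :=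
  ⋂₀ {U : Set C | S ⊆ U ∧ IsTriangulatedSub U}

/-- `S[+] = {X | X ≅ C[n], C ∈ S, n ≥ 0}`. -/
def plusClass (S : Set C) : Set C :=
  {X | ∃ Y ∈ S, ∃ n : ℕ, Nonempty (X ≅ Y⟦(n : ℤ)⟧)}

/-- `S[-] = {X | X ≅ C[n], C ∈ S, n ≤ 0}`. -/
def minusClass (S : Set C) : Set C :=
  {X | ∃ Y ∈ S, ∃ n : ℕ, Nonempty (X ≅ Y⟦(-(n : ℤ))⟧)}

/-- `f` factors through an object of `add ω`. -/
def FactorsThruAdd (ω : Set C) {X Y : C} (f : X ⟶ Y) : Prop :=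
  ∃ (M : C) (g : X ⟶ M) (h : M ⟶ Y), AddCat ω M ∧ g ≫ h = f

/-- The `ω`-Gorenstein objects: `G_ω = ωX ∩ X_ω`. -/
def Gor (ω : Set C) : Set C := coAuslander ω ∩ Auslander ω



set_option linter.unusedSectionVars false

lemma shift_hom_zero {A B : C} {j : ℤ} (hAB : ∀ f : A ⟶ B⟦j⟧, f = 0)
    (n m : ℤ) (hm : m = n + j) (u : A⟦n⟧ ⟶ B⟦m⟧) : u = 0 := by
  have h1 : n + (-n) = 0 := by ring
  have h2 : m + (-n) = j := by omega
  have hv := hAB ((shiftFunctorCompIsoId C n (-n) h1).inv.app A ≫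
    (shiftFunctor C (-n)).map u ≫ (shiftFunctorAdd' C m (-n) j h2).inv.app B)
  have hz : (shiftFunctor C (-n)).map u = 0 := by
    have heq : (shiftFunctor C (-n)).map u =
        (shiftFunctorCompIsoId C n (-n) h1).hom.app A ≫
        ((shiftFunctorCompIsoId C n (-n) h1).inv.app A ≫
          (shiftFunctor C (-n)).map u ≫ (shiftFunctorAdd' C m (-n) j h2).inv.app B) ≫
        (shiftFunctorAdd' C m (-n) j h2).hom.app B := by simp
    rw [heq, hv]; simp
  apply (shiftFunctor C (-n)).map_injective
  simpa using hz

lemma shift_hom_zero' {A B : C} {j : ℤ} (hAB : ∀ f : A ⟶ B⟦j⟧, f = 0)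
    (n : ℤ) (hn : (0:ℤ) = n + j) (u : A⟦n⟧ ⟶ B) : u = 0 := by
  have hz := shift_hom_zero hAB n 0 hn (u ≫ (shiftFunctorZero C ℤ).inv.app B)
  have hu : u = (u ≫ (shiftFunctorZero C ℤ).inv.app B) ≫ (shiftFunctorZero C ℤ).hom.app B := by
    simp
  rw [hu, hz]; simp

lemma addCat_hom_zero_from {ω : Set C} {X : C} (hX : ∀ M ∈ ω, ∀ f : M ⟶ X, f = 0) :
    ∀ {M : C}, AddCat ω M → ∀ f : M ⟶ X, f = 0 := by
  intro M hM
  induction hM with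
  | of h => exact hX _ h
  | zero h => intro f; exact h.eq_of_src f 0
  | sum i₁ i₂ p₁ p₂ h₁ h₂ h₁₂ h₂₁ hZ hXa hYa ihX ihY =>
      intro f
      have h : f = (p₁ ≫ i₁ + p₂ ≫ i₂) ≫ f := by rw [hZ, id_comp]
      rw [h, Preadditive.add_comp, assoc, assoc, ihX (i₁ ≫ f), ihY (i₂ ≫ f), comp_zero,
        comp_zero, add_zero]
  | retract a r har hY ih =>
      intro f
      have h : f = (a ≫ r) ≫ f := by rw [har, id_comp]
      rw [h, assoc, ih (r ≫ f), comp_zero]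

lemma addCat_hom_zero_to {ω : Set C} {X : C} (i : ℤ) (hX : ∀ M ∈ ω, ∀ f : X ⟶ M⟦i⟧, f = 0) :
    ∀ {M : C}, AddCat ω M → ∀ f : X ⟶ M⟦i⟧, f = 0 := by
  intro M hM
  induction hM with
  | of h => exact hX _ h
  | zero h =>
      intro f
      exact (((shiftFunctor C i).map_isZero h).eq_of_tgt f 0)
  | sum i₁ i₂ p₁ p₂ h₁ h₂ h₁₂ h₂₁ hZ hXa hYa ihX ihY =>
      intro f
      have h : f = f ≫ (shiftFunctor C i).map (p₁ ≫ i₁ + p₂ ≫ i₂) := by rw [hZ]; simp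
      rw [h, Functor.map_add, Preadditive.comp_add, Functor.map_comp, Functor.map_comp,
        ← assoc, ← assoc, ihX (f ≫ (shiftFunctor C i).map p₁),
        ihY (f ≫ (shiftFunctor C i).map p₂), zero_comp, zero_comp, add_zero]
  | retract a r har hY ih =>
      intro f
      have h : f = f ≫ (shiftFunctor C i).map (a ≫ r) := by rw [har]; simp
      rw [h, Functor.map_comp, ← assoc, ih (f ≫ (shiftFunctor C i).map a), zero_comp]

lemma stepRight {ω : Set C} (hω : SemiSelfOrth ω)
    (hright : ∀ X : C, ∃ (M : C) (f : M ⟶ X), AddCat ω M ∧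
      ∀ M' : C, AddCat ω M' → ∀ g : M' ⟶ X, ∃ h : M' ⟶ M, h ≫ f = g)
    {N : C} (hN : N ∈ rightPerp ω) :
    ∃ (T' M : C) (f : T' ⟶ M) (g : M ⟶ N) (h : N ⟶ T'⟦(1:ℤ)⟧),
      (Triangle.mk f g h ∈ distTriang C) ∧ AddCat ω M ∧ T' ∈ rightPerp ω := by
  obtain ⟨M, g, hM, happrox⟩ := hright N
  obtain ⟨T', f, h, hdist⟩ := distinguished_cocone_triangle₁ g
  refine ⟨T', M, f, g, h, hdist, hM, ?_⟩
  intro M₀ hM₀ i hi φ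
  have e := (shiftFunctorAdd' C i (1-i) 1 (by ring)).inv.app T'
  set φt : M₀⟦(1-i : ℤ)⟧ ⟶ T'⟦(1:ℤ)⟧ :=
    (shiftFunctor C (1-i)).map φ ≫ (shiftFunctorAdd' C i (1-i) 1 (by ring)).inv.app T' with hφt
  have hAB : ∀ u : M₀ ⟶ M⟦i⟧, u = 0 :=
    addCat_hom_zero_to i (fun M₁ h₁ u => hω M₀ hM₀ M₁ h₁ i hi u) hM
  have hf0 : φt ≫ (Triangle.mk f g h).mor₁⟦(1:ℤ)⟧' = 0 :=
    shift_hom_zero hAB (1-i) 1 (by ring) _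
  obtain ⟨ψ, hψ⟩ := Triangle.coyoneda_exact₁ _ hdist φt hf0
  have hφt0 : φt = 0 := by
    by_cases h1 : i = 1
    · subst h1
      have hM₀' : AddCat ω (M₀⟦(1-(1:ℤ) : ℤ)⟧) := by
        refine AddCat.retract ((shiftFunctorZero' C (1-(1:ℤ)) (by ring)).hom.app M₀)
          ((shiftFunctorZero' C (1-(1:ℤ)) (by ring)).inv.app M₀) (by simp) (AddCat.of hM₀)
      obtain ⟨η, hη⟩ := happrox _ hM₀' ψ
      have hgh := comp_distTriang_mor_zero₂₃ _ hdist
      rw [hψ, ← hη]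
      dsimp only [Triangle.mk] at hgh ⊢
      rw [assoc, hgh]; exact comp_zero
    · have hψ0 : ψ = 0 :=
        shift_hom_zero' (fun u => hN M₀ hM₀ (i-1) (by omega) u) (1-i) (by ring) ψ
      rw [hψ, hψ0, zero_comp]; rfl
  have hmap : (shiftFunctor C (1-i)).map φ = 0 := by
    rw [← cancel_mono ((shiftFunctorAdd' C i (1-i) 1 (by ring)).inv.app T'), zero_comp]
    exact hφt0
  exact (shiftFunctor C (1-i)).map_injective (by rw [hmap, Functor.map_zero])

lemma stepLeft {ω : Set C} (hω : SemiSelfOrth ω)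
    (hleft : ∀ X : C, ∃ (M : C) (f : X ⟶ M), AddCat ω M ∧
      ∀ M' : C, AddCat ω M' → ∀ g : X ⟶ M', ∃ h : M ⟶ M', f ≫ h = g)
    {N : C} (hN : N ∈ leftPerp ω) :
    ∃ (T' M : C) (f : N ⟶ M) (g : M ⟶ T') (h : T' ⟶ N⟦(1:ℤ)⟧),
      (Triangle.mk f g h ∈ distTriang C) ∧ AddCat ω M ∧ T' ∈ leftPerp ω := by
  obtain ⟨M, f, hM, happrox⟩ := hleft N
  obtain ⟨T', g, h, hdist⟩ := distinguished_cocone_triangle f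
  refine ⟨T', M, f, g, h, hdist, hM, ?_⟩
  intro M₀ hM₀ i hi φ
  have hgφ : g ≫ φ = 0 :=
    addCat_hom_zero_from (fun M₁ h₁ u => hω M₁ h₁ M₀ hM₀ i hi u) hM (g ≫ φ)
  obtain ⟨ψ, hψ⟩ := Triangle.yoneda_exact₃ _ hdist φ hgφ
  by_cases h1 : i = 1
  · subst h1
    set ρ : N ⟶ M₀ := (shiftFunctor C (1:ℤ)).preimage ψ with hρ
    obtain ⟨η, hη⟩ := happrox M₀ (AddCat.of hM₀) ρ
    have h31 := comp_distTriang_mor_zero₃₁ _ hdist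
    dsimp only [Triangle.mk] at h31 hψ ⊢
    rw [hψ, ← (shiftFunctor C (1:ℤ)).map_preimage ψ]
    change h ≫ (shiftFunctor C (1:ℤ)).map ρ = 0
    rw [← hη, Functor.map_comp,
      ← assoc, h31]; exact zero_comp
  · have hψ0 : ψ = 0 :=
      shift_hom_zero (fun u => hN M₀ hM₀ (i-1) (by omega) u) 1 i (by omega) ψ
    rw [hψ, hψ0, comp_zero]; rfl

end RelSing

open RelSing

variable {C : Type u} [Category.{v} C] [Preadditive C] [HasZeroObject C]
  [HasShift C ℤ] [∀ n : ℤ, (shiftFunctor C n).Additive] [Pretriangulated C]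

/-- If a semi-selforthogonal `ω` is functorially finite (every object has a left and a
right `add ω`-approximation), then `ω⊥ = ωX` and `⊥ω = X_ω`. -/
theorem stmt14 (ω : Set C) (hω : SemiSelfOrth ω)
    (hleft : ∀ X : C, ∃ (M : C) (f : X ⟶ M), AddCat ω M ∧
      ∀ M' : C, AddCat ω M' → ∀ g : X ⟶ M', ∃ h : M ⟶ M', f ≫ h = g)
    (hright : ∀ X : C, ∃ (M : C) (f : M ⟶ X), AddCat ω M ∧
      ∀ M' : C, AddCat ω M' → ∀ g : M' ⟶ X, ∃ h : M' ⟶ M, h ≫ f = g) :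
    rightPerp ω = coAuslander ω ∧ leftPerp ω = Auslander ω := by
  constructor
  · ext X
    constructor
    · intro hX
      have H : ∀ Y : {Y : C // Y ∈ rightPerp ω}, ∃ (T' M : C) (f : T' ⟶ M) (g : M ⟶ Y.1)
          (h : Y.1 ⟶ T'⟦(1:ℤ)⟧), (Triangle.mk f g h ∈ distTriang C) ∧ AddCat ω M ∧
          T' ∈ rightPerp ω := fun Y => stepRight hω hright Y.2
      choose T' M f g h hd hM hp using H
      let next : {Y : C // Y ∈ rightPerp ω} → {Y : C // Y ∈ rightPerp ω} :=
        fun Y => ⟨T' Y, hp Y⟩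
      let Tf : ℕ → {Y : C // Y ∈ rightPerp ω} := fun n => Nat.rec ⟨X, hX⟩ (fun _ Y => next Y) n
      exact ⟨fun n => (Tf n).1, fun n => M (Tf n), fun n => f (Tf n), fun n => g (Tf n),
        fun n => h (Tf n), rfl, fun n => hd (Tf n), fun n => hM (Tf n), fun n => (Tf n).2⟩
    · rintro ⟨T, M, f, g, h, hT0, _, _, hperp⟩
      rw [← hT0]; exact hperp 0
  · ext X
    constructor
    · intro hX
      have H : ∀ Y : {Y : C // Y ∈ leftPerp ω}, ∃ (T' M : C) (f : Y.1 ⟶ M) (g : M ⟶ T')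
          (h : T' ⟶ Y.1⟦(1:ℤ)⟧), (Triangle.mk f g h ∈ distTriang C) ∧ AddCat ω M ∧
          T' ∈ leftPerp ω := fun Y => stepLeft hω hleft Y.2
      choose T' M f g h hd hM hp using H
      let next : {Y : C // Y ∈ leftPerp ω} → {Y : C // Y ∈ leftPerp ω} :=
        fun Y => ⟨T' Y, hp Y⟩
      let Tf : ℕ → {Y : C // Y ∈ leftPerp ω} := fun n => Nat.rec ⟨X, hX⟩ (fun _ Y => next Y) n
      exact ⟨fun n => (Tf n).1, fun n => M (Tf n), fun n => f (Tf n), fun n => g (Tf n),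
        fun n => h (Tf n), rfl, fun n => hd (Tf n), fun n => hM (Tf n), fun n => (Tf n).2⟩
    · rintro ⟨T, M, f, g, h, hT0, _, _, hperp⟩
      rw [← hT0]; exact hperp 0
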